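/- arXiv:1501.04826 — 2 statements merged into one kernel-verified Lean document; each statement's English description precedes it below -/
import Mathlib

section
/- Let γ be a confidence parameter with 0 < γ < 1, let X₀ → Y₀, X₁ → Y₁, …, X_k → Y_k be partial implications over [n] with k ≥ 1, and assume that the entailment X₁ → Y₁, …, X_k → Y_k ⊨_γ X₀ → Y₀ holds properly. Then for every i ∈ [k], X_i ⊆ X₀ and X_iY_i ⊄ X₀. -/
open Finset

/-- Number of transactions in the dataset `D` that cover `X`, counted with multiplicity. -/
def cntD {n : ℕ} (D : Multiset (Finset (Fin n))) (X : Finset (Fin n)) : ℕ :=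
  (D.filter (fun Z => X ⊆ Z)).card

/-- `D ⊨_γ X → Y` : either no transaction covers `X`, or the confidence of `X → Y` is ≥ γ. -/
def satPI {n : ℕ} (γ : ℝ) (D : Multiset (Finset (Fin n))) (X Y : Finset (Fin n)) : Prop :=
  cntD D X = 0 ∨ γ * (cntD D X : ℝ) ≤ (cntD D (X ∪ Y) : ℝ)

/-- Entailment at confidence threshold γ from the premises indexed by `L`. -/
def entailsFrom {n k : ℕ} (γ : ℝ) (P : Fin k → Finset (Fin n) × Finset (Fin n))
    (L : Finset (Fin k)) (X₀ Y₀ : Finset (Fin n)) : Prop :=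
  ∀ D : Multiset (Finset (Fin n)),
    (∀ i ∈ L, satPI γ D (P i).1 (P i).2) → satPI γ D X₀ Y₀

/-- Proper entailment from the premises indexed by `L`: the entailment holds,
and it fails from every proper subset of the premises. -/
def properFrom {n k : ℕ} (γ : ℝ) (P : Fin k → Finset (Fin n) × Finset (Fin n))
    (L : Finset (Fin k)) (X₀ Y₀ : Finset (Fin n)) : Prop :=
  entailsFrom γ P L X₀ Y₀ ∧ ∀ L' ⊂ L, ¬ entailsFrom γ P L' X₀ Y₀

/-- The weight `w_Z(X → Y)`: `1-γ` if `Z` witnesses, `-γ` if `Z` violates, `0` otherwise. -/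
noncomputable def wt {n : ℕ} (γ : ℝ) (Z X Y : Finset (Fin n)) : ℝ :=
  if X ∪ Y ⊆ Z then 1 - γ else if X ⊆ Z then -γ else 0

/-- The premises indexed by `L` enforce homogeneity. -/
def homogFrom {n k : ℕ} (P : Fin k → Finset (Fin n) × Finset (Fin n))
    (L : Finset (Fin k)) : Prop :=
  ∀ Z : Finset (Fin n),
    (∀ i ∈ L, ¬ (P i).1 ⊆ Z ∨ (P i).1 ∪ (P i).2 ⊆ Z) →
    ((∀ i ∈ L, ¬ (P i).1 ⊆ Z) ∨ (∀ i ∈ L, (P i).1 ∪ (P i).2 ⊆ Z))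

/-- The critical threshold `γ*({Xᵢ → Yᵢ : i ∈ L}, X)`. -/
noncomputable def gammaStar {n k : ℕ} (P : Fin k → Finset (Fin n) × Finset (Fin n))
    (L : Finset (Fin k)) (X : Finset (Fin n)) : ℝ :=
  sInf { r : ℝ | ∃ lam : Fin k → ℝ, (∀ i ∈ L, 0 ≤ lam i) ∧ (∑ i ∈ L, lam i) = 1 ∧
    r = (Finset.univ.filter (fun Z : Finset (Fin n) => ¬ X ⊆ Z)).fold max 0
          (fun Z => (∑ i ∈ L.filter (fun i => (P i).1 ∪ (P i).2 ⊆ Z), lam i) /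
                    (∑ i ∈ L.filter (fun i => (P i).1 ⊆ Z), lam i)) }

section Aux1
variable {n : ℕ} {γ : ℝ}

lemma wt_eq (γ : ℝ) (Z X Y : Finset (Fin n)) :
    wt γ Z X Y = (if X ∪ Y ⊆ Z then (1:ℝ) else 0) - γ * (if X ⊆ Z then 1 else 0) := by
  unfold wt
  by_cases h1 : X ∪ Y ⊆ Z
  · have h2 : X ⊆ Z := fun x hx => h1 (Finset.mem_union_left _ hx)
    simp [h1, h2]
  · by_cases h2 : X ⊆ Z <;> simp [h1, h2]

lemma wt_bounds (hγ0 : 0 < γ) (hγ1 : γ < 1) (Z X Y : Finset (Fin n)) :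
    -1 ≤ wt γ Z X Y ∧ wt γ Z X Y ≤ 1 := by
  unfold wt; split_ifs <;> constructor <;> linarith

lemma wt_univ (γ : ℝ) (X Y : Finset (Fin n)) : wt γ Finset.univ X Y = 1 - γ := by
  unfold wt; simp

lemma wt_nonneg_of (hγ1 : γ ≤ 1) {Z X Y : Finset (Fin n)}
    (h : ¬ (X ⊆ Z ∧ ¬ (X ∪ Y ⊆ Z))) : 0 ≤ wt γ Z X Y := by
  unfold wt
  split_ifs with h1 h2
  · linarith
  · exact absurd ⟨h2, h1⟩ h
  · exact le_rfl

lemma wt_neg_imp (hγ1 : γ ≤ 1) {Z X Y : Finset (Fin n)}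
    (h : wt γ Z X Y < 0) : X ⊆ Z ∧ ¬ (X ∪ Y ⊆ Z) := by
  by_contra hc
  exact absurd (wt_nonneg_of hγ1 hc) (not_le.mpr h)

lemma wt_of_neg (hγ1 : γ ≤ 1) {Z X Y : Finset (Fin n)}
    (h : wt γ Z X Y < 0) : wt γ Z X Y = -γ := by
  obtain ⟨h1, h2⟩ := wt_neg_imp hγ1 h
  unfold wt
  simp [h1, h2]

end Aux1

section Aux2
variable {n : ℕ} {γ : ℝ}

lemma cntD_cons (a : Finset (Fin n)) (D : Multiset (Finset (Fin n))) (X : Finset (Fin n)) :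
    cntD (a ::ₘ D) X = (if X ⊆ a then 1 else 0) + cntD D X := by
  unfold cntD
  rw [Multiset.filter_cons, Multiset.card_add]
  split_ifs <;> simp

lemma cntD_mono (D : Multiset (Finset (Fin n))) (X Y : Finset (Fin n)) :
    cntD D (X ∪ Y) ≤ cntD D X := by
  unfold cntD
  exact Multiset.card_le_card (Multiset.monotone_filter_right D
    (fun Z hZ x hx => hZ (Finset.mem_union_left _ hx)))

lemma satPI_iff (hγ0 : 0 < γ) (D : Multiset (Finset (Fin n))) (X Y : Finset (Fin n)) :
    satPI γ D X Y ↔ γ * (cntD D X : ℝ) ≤ (cntD D (X ∪ Y) : ℝ) := by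
  constructor
  · rintro (h | h)
    · have h2 : cntD D (X ∪ Y) = 0 := Nat.le_zero.mp (h ▸ cntD_mono D X Y)
      simp [h, h2]
    · exact h
  · exact Or.inr

lemma sum_wt (γ : ℝ) (D : Multiset (Finset (Fin n))) (X Y : Finset (Fin n)) :
    (cntD D (X ∪ Y) : ℝ) - γ * (cntD D X : ℝ)
      = ∑ Z ∈ Finset.univ, (D.count Z : ℝ) * wt γ Z X Y := by
  induction D using Multiset.induction_on with
  | empty => simp [cntD]
  | cons a D ih =>
    have hcnt : ∀ Z : Finset (Fin n),
        ((a ::ₘ D).count Z : ℝ) = (D.count Z : ℝ) + (if Z = a then 1 else 0) := by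
      intro Z
      rw [Multiset.count_cons]
      push_cast
      rfl
    calc (cntD (a ::ₘ D) (X ∪ Y) : ℝ) - γ * (cntD (a ::ₘ D) X : ℝ)
        = ((cntD D (X ∪ Y) : ℝ) - γ * (cntD D X : ℝ)) + wt γ a X Y := by
          rw [cntD_cons, cntD_cons, wt_eq]
          push_cast
          ring
      _ = ∑ Z ∈ Finset.univ, (D.count Z : ℝ) * wt γ Z X Y + wt γ a X Y := by rw [ih]
      _ = ∑ Z ∈ Finset.univ, ((a ::ₘ D).count Z : ℝ) * wt γ Z X Y := by
          simp only [hcnt, add_mul, Finset.sum_add_distrib, ite_mul, one_mul, zero_mul]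
          rw [Finset.sum_ite_eq' Finset.univ a (fun Z => wt γ Z X Y)]
          simp

lemma card_eq_sum_count (D : Multiset (Finset (Fin n))) :
    ∑ Z ∈ Finset.univ, D.count Z = Multiset.card D := by
  rw [← Multiset.toFinset_sum_count_eq D]
  exact (Finset.sum_subset (Finset.subset_univ _) (fun Z _ hZ =>
    Multiset.count_eq_zero_of_notMem (by simpa [Multiset.mem_toFinset] using hZ))).symm

noncomputable def mkD {n : ℕ} (μ : Finset (Fin n) → ℕ) : Multiset (Finset (Fin n)) :=
  ∑ Z ∈ Finset.univ, Multiset.replicate (μ Z) Z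

lemma count_mkD (μ : Finset (Fin n) → ℕ) (Z : Finset (Fin n)) :
    (mkD μ).count Z = μ Z := by
  unfold mkD
  rw [Multiset.count_sum']
  simp only [Multiset.count_replicate]
  rw [Finset.sum_ite_eq' Finset.univ Z μ]
  simp

end Aux2

section Aux3
variable {n k : ℕ} {γ : ℝ}

lemma real_entail (hγ0 : 0 < γ) (hγ1 : γ < 1)
    (P : Fin k → Finset (Fin n) × Finset (Fin n)) (X₀ Y₀ : Finset (Fin n))
    (hent : entailsFrom γ P Finset.univ X₀ Y₀)
    (μ : Finset (Fin n) → ℝ) (hμ : ∀ Z, 0 ≤ μ Z)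
    (hprem : ∀ i : Fin k, 0 ≤ ∑ Z ∈ Finset.univ, μ Z * wt γ Z (P i).1 (P i).2) :
    0 ≤ ∑ Z ∈ Finset.univ, μ Z * wt γ Z X₀ Y₀ := by
  set N : ℝ := (Fintype.card (Finset (Fin n)) : ℝ) with hN
  have hN0 : 0 ≤ N := by positivity
  set T : ℕ := ⌈N / (1 - γ)⌉₊ with hT
  have hTge : N ≤ (T : ℝ) * (1 - γ) := by
    have h1 : N / (1 - γ) ≤ (T : ℝ) := Nat.le_ceil _
    have h2 : 0 < 1 - γ := by linarith
    calc N = N / (1 - γ) * (1 - γ) := by field_simp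
    _ ≤ (T : ℝ) * (1 - γ) := by nlinarith
  -- key sum bounds for the integer approximation
  have key : ∀ M : ℕ, ∀ X Y : Finset (Fin n),
      let ν : Finset (Fin n) → ℕ :=
        fun Z => ⌈(M : ℝ) * μ Z⌉₊ + (if Z = Finset.univ then T else 0)
      (M : ℝ) * (∑ Z ∈ Finset.univ, μ Z * wt γ Z X Y) - N + (T : ℝ) * (1 - γ)
        ≤ ∑ Z ∈ Finset.univ, (ν Z : ℝ) * wt γ Z X Y ∧
      ∑ Z ∈ Finset.univ, (ν Z : ℝ) * wt γ Z X Y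
        ≤ (M : ℝ) * (∑ Z ∈ Finset.univ, μ Z * wt γ Z X Y) + N + (T : ℝ) * (1 - γ) := by
    intro M X Y ν
    have hsplit : ∑ Z ∈ Finset.univ, (ν Z : ℝ) * wt γ Z X Y
        = (∑ Z ∈ Finset.univ, (⌈(M : ℝ) * μ Z⌉₊ : ℝ) * wt γ Z X Y) + (T : ℝ) * (1 - γ) := by
      simp only [ν]
      push_cast
      rw [Finset.sum_congr rfl (fun Z _ => add_mul ((⌈(M : ℝ) * μ Z⌉₊ : ℝ)) _ _),
        Finset.sum_add_distrib]
      congr 1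
      simp only [ite_mul, zero_mul]
      rw [Finset.sum_ite_eq' Finset.univ Finset.univ (fun Z => (T:ℝ) * wt γ Z X Y)]
      simp [wt_univ]
    have hlow : ∀ Z : Finset (Fin n),
        (M : ℝ) * μ Z * wt γ Z X Y - 1 ≤ (⌈(M : ℝ) * μ Z⌉₊ : ℝ) * wt γ Z X Y ∧
        (⌈(M : ℝ) * μ Z⌉₊ : ℝ) * wt γ Z X Y ≤ (M : ℝ) * μ Z * wt γ Z X Y + 1 := by
      intro Z
      have hx : 0 ≤ (M : ℝ) * μ Z := mul_nonneg (Nat.cast_nonneg M) (hμ Z)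
      have h1 : (M : ℝ) * μ Z ≤ (⌈(M : ℝ) * μ Z⌉₊ : ℝ) := Nat.le_ceil _
      have h2 : (⌈(M : ℝ) * μ Z⌉₊ : ℝ) ≤ (M : ℝ) * μ Z + 1 :=
        le_of_lt (Nat.ceil_lt_add_one hx)
      obtain ⟨hb1, hb2⟩ := wt_bounds hγ0 hγ1 Z X Y
      constructor <;> nlinarith
    constructor
    · rw [hsplit]
      have : (M : ℝ) * (∑ Z ∈ Finset.univ, μ Z * wt γ Z X Y) - N
          ≤ ∑ Z ∈ Finset.univ, (⌈(M : ℝ) * μ Z⌉₊ : ℝ) * wt γ Z X Y := by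
        rw [Finset.mul_sum, hN]
        calc ∑ Z ∈ Finset.univ, (M : ℝ) * (μ Z * wt γ Z X Y) - (Fintype.card (Finset (Fin n)) : ℝ)
            = ∑ Z ∈ Finset.univ, ((M : ℝ) * μ Z * wt γ Z X Y - 1) := by
              rw [Finset.sum_sub_distrib]
              simp [Finset.card_univ, mul_assoc]
        _ ≤ _ := Finset.sum_le_sum (fun Z _ => (hlow Z).1)
      linarith
    · rw [hsplit]
      have : ∑ Z ∈ Finset.univ, (⌈(M : ℝ) * μ Z⌉₊ : ℝ) * wt γ Z X Y
          ≤ (M : ℝ) * (∑ Z ∈ Finset.univ, μ Z * wt γ Z X Y) + N := by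
        rw [Finset.mul_sum, hN]
        calc ∑ Z ∈ Finset.univ, (⌈(M : ℝ) * μ Z⌉₊ : ℝ) * wt γ Z X Y
            ≤ ∑ Z ∈ Finset.univ, ((M : ℝ) * μ Z * wt γ Z X Y + 1) :=
              Finset.sum_le_sum (fun Z _ => (hlow Z).2)
        _ = _ := by
              rw [Finset.sum_add_distrib]
              simp [Finset.card_univ, mul_assoc]
      linarith
  -- conclusion
  by_contra hneg
  push_neg at hneg
  set S₀ : ℝ := ∑ Z ∈ Finset.univ, μ Z * wt γ Z X₀ Y₀ with hS₀
  obtain ⟨M, hM⟩ := exists_nat_gt ((N + (T : ℝ) * (1 - γ)) / (-S₀))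
  set ν : Finset (Fin n) → ℕ :=
    fun Z => ⌈(M : ℝ) * μ Z⌉₊ + (if Z = Finset.univ then T else 0) with hν
  have hsat : ∀ i ∈ (Finset.univ : Finset (Fin k)), satPI γ (mkD ν) (P i).1 (P i).2 := by
    intro i _
    rw [satPI_iff hγ0]
    have h1 := (key M (P i).1 (P i).2).1
    have h2 := sum_wt γ (mkD ν) (P i).1 (P i).2
    simp only [count_mkD] at h2
    have h3 : 0 ≤ (M : ℝ) * (∑ Z ∈ Finset.univ, μ Z * wt γ Z (P i).1 (P i).2) := by
      have := hprem i
      positivity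
    have h4 : (0:ℝ) ≤ ∑ Z ∈ Finset.univ, (ν Z : ℝ) * wt γ Z (P i).1 (P i).2 := by
      refine le_trans ?_ h1
      linarith
    linarith [h2, h4]
  have hconc := (satPI_iff hγ0 (mkD ν) X₀ Y₀).mp (hent (mkD ν) hsat)
  have h2 := sum_wt γ (mkD ν) X₀ Y₀
  simp only [count_mkD] at h2
  have h5 : (0:ℝ) ≤ ∑ Z ∈ Finset.univ, (ν Z : ℝ) * wt γ Z X₀ Y₀ := by linarith
  have h6 := (key M X₀ Y₀).2
  -- 0 ≤ M * S₀ + N + T(1-γ), but M > (N+T(1-γ))/(-S₀)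
  have hS₀neg : 0 < -S₀ := by linarith
  have h7 : (N + (T : ℝ) * (1 - γ)) < (M : ℝ) * (-S₀) := by
    rw [div_lt_iff₀ hS₀neg] at hM
    linarith
  have h8 : (0:ℝ) ≤ (M : ℝ) * S₀ + N + (T : ℝ) * (1 - γ) := by
    have := le_trans h5 h6
    linarith
  nlinarith

end Aux3

section Aux4
variable {n k : ℕ} {γ : ℝ}

lemma eps_dual (hγ0 : 0 < γ) (hγ1 : γ < 1)
    (P : Fin k → Finset (Fin n) × Finset (Fin n)) (X₀ Y₀ : Finset (Fin n))
    (hent : entailsFrom γ P Finset.univ X₀ Y₀)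
    (ε : ℝ) (hε : 0 < ε) :
    ∃ lam : Fin k → ℝ, (∀ i, 0 ≤ lam i) ∧
      ∀ Z : Finset (Fin n), ∑ i ∈ Finset.univ, lam i * wt γ Z (P i).1 (P i).2
        ≤ wt γ Z X₀ Y₀ + ε := by
  by_contra hcon
  push_neg at hcon
  -- hcon : ∀ lam, (∀ i, 0 ≤ lam i) → ∃ Z, wt γ Z X₀ Y₀ + ε < ∑ i, lam i * wt ...
  set w : Fin k → (Finset (Fin n) → ℝ) := fun i Z => wt γ Z (P i).1 (P i).2 with hw
  set w0 : (Finset (Fin n) → ℝ) := fun Z => wt γ Z X₀ Y₀ with hw0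
  set s : Set (Finset (Fin n) → ℝ) := {u | ∀ Z, u Z < ε} with hs
  set t : Set (Finset (Fin n) → ℝ) := {u | ∃ lam : Fin k → ℝ, ∃ v : (Finset (Fin n) → ℝ), (∀ i, 0 ≤ lam i) ∧ (∀ Z, 0 ≤ v Z) ∧
      u = (fun Z => ∑ i ∈ Finset.univ, lam i * w i Z) + v - w0} with ht
  have hs₁ : Convex ℝ s := by
    have : s = ⋂ Z, {u : (Finset (Fin n) → ℝ) | u Z < ε} := by
      ext u; simp [hs]
    rw [this]
    exact convex_iInter fun Z =>
      convex_halfSpace_lt ⟨fun a b => rfl, fun c a => rfl⟩ ε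
  have hs₂ : IsOpen s := by
    have : s = ⋂ Z, (fun u : (Finset (Fin n) → ℝ) => u Z) ⁻¹' Set.Iio ε := by
      ext u; simp [hs, Set.mem_iInter]
    rw [this]
    exact isOpen_iInter_of_finite fun Z => (continuous_apply Z).isOpen_preimage _ isOpen_Iio
  have ht₁ : Convex ℝ t := by
    rintro u1 ⟨l1, v1, hl1, hv1, rfl⟩ u2 ⟨l2, v2, hl2, hv2, rfl⟩ a b ha hb hab
    refine ⟨a • l1 + b • l2, a • v1 + b • v2, ?_, ?_, ?_⟩
    · intro i
      exact add_nonneg (mul_nonneg ha (hl1 i)) (mul_nonneg hb (hl2 i))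
    · intro Z
      exact add_nonneg (mul_nonneg ha (hv1 Z)) (mul_nonneg hb (hv2 Z))
    · funext Z
      simp only [Pi.add_apply, Pi.sub_apply, Pi.smul_apply, smul_eq_mul]
      have hsum : ∑ i ∈ Finset.univ, (a * l1 i + b * l2 i) * w i Z
          = a * ∑ i ∈ Finset.univ, l1 i * w i Z + b * ∑ i ∈ Finset.univ, l2 i * w i Z := by
        rw [Finset.mul_sum, Finset.mul_sum, ← Finset.sum_add_distrib]
        exact Finset.sum_congr rfl (fun i _ => by ring)
      rw [hsum]
      linear_combination (-(w0 Z)) * hab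
  have hdisj : Disjoint s t := by
    rw [Set.disjoint_left]
    rintro u hu ⟨lam, v, hlam, hv, rfl⟩
    obtain ⟨Z, hZ⟩ := hcon lam hlam
    have h1 := hu Z
    simp only [hs, Pi.add_apply, Pi.sub_apply, Set.mem_setOf_eq] at h1
    have h2 := hv Z
    simp only [hw, hw0] at hZ h1
    linarith
  obtain ⟨f, c, hfs, hft⟩ := geometric_hahn_banach_open hs₁ hs₂ ht₁ hdisj
  have hc0 : 0 < c := by
    have h0 : (0 : Finset (Fin n) → ℝ) ∈ s := by intro Z; simpa using hε
    have := hfs 0 h0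
    simpa using this
  set e : Finset (Fin n) → (Finset (Fin n) → ℝ) := fun Z W => if Z = W then (1:ℝ) else 0 with he
  have hdec : ∀ u : (Finset (Fin n) → ℝ), f u = ∑ Z ∈ Finset.univ, u Z * f (e Z) := by
    intro u
    conv_lhs => rw [pi_eq_sum_univ u, map_sum]
    simp [map_smul, smul_eq_mul]
    rfl
  have ray : ∀ v : (Finset (Fin n) → ℝ), (∀ t0 : ℝ, 0 ≤ t0 → c ≤ f (t0 • v - w0)) → 0 ≤ f v := by
    intro v hv
    by_contra hneg
    push_neg at hneg
    have h0 : c ≤ f ((0:ℝ) • v - w0) := hv 0 le_rfl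
    rw [zero_smul, zero_sub, map_neg] at h0
    have hfv : 0 < -(f v) := by linarith
    set t0 : ℝ := (-(f w0) - c + 1) / (-(f v)) with ht0
    have ht0pos : 0 ≤ t0 := by
      apply div_nonneg _ (le_of_lt hfv)
      linarith
    have hv2 := hv t0 ht0pos
    rw [map_sub, map_smul, smul_eq_mul] at hv2
    have e1 : t0 * (-(f v)) = (-(f w0) - c + 1) := div_mul_cancel₀ _ (ne_of_gt hfv)
    have e2 : t0 * f v = -(-(f w0) - c + 1) := by linear_combination -e1
    rw [e2] at hv2
    linarith
  have hmemw0 : (-w0) ∈ t := by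
    refine ⟨0, 0, fun i => le_rfl, fun Z => le_rfl, ?_⟩
    funext Z
    simp
  have hμpos : ∀ Z, 0 ≤ f (e Z) := by
    intro Z
    apply ray (e Z)
    intro t0 ht0
    apply hft
    refine ⟨0, t0 • e Z, fun i => le_rfl, ?_, ?_⟩
    · intro W
      have h1 : (0:ℝ) ≤ e Z W := by
        simp only [he]
        split <;> norm_num
      exact mul_nonneg ht0 h1
    · funext W
      simp
  have hwpos : ∀ i : Fin k, 0 ≤ f (w i) := by
    intro i
    apply ray (w i)
    intro t0 ht0
    apply hft
    refine ⟨fun j => if j = i then t0 else 0, 0, ?_, fun Z => le_rfl, ?_⟩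
    · intro j
      by_cases h : j = i <;> simp [h, ht0]
    · funext Z
      simp only [Pi.add_apply, Pi.sub_apply, Pi.smul_apply, Pi.zero_apply, smul_eq_mul,
        ite_mul, zero_mul]
      rw [Finset.sum_ite_eq' Finset.univ i (fun j => t0 * w j Z)]
      simp
  -- apply real_entail with μ Z := f (e Z)
  have hconc := real_entail hγ0 hγ1 P X₀ Y₀ hent (fun Z => f (e Z)) hμpos ?_
  · have hfw0 : f w0 = ∑ Z ∈ Finset.univ, f (e Z) * wt γ Z X₀ Y₀ := by
      rw [hdec w0]
      exact Finset.sum_congr rfl (fun Z _ => mul_comm _ _)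
    have hneg : c ≤ f (-w0) := hft _ hmemw0
    rw [map_neg] at hneg
    rw [← hfw0] at hconc
    linarith
  · intro i
    have : f (w i) = ∑ Z ∈ Finset.univ, f (e Z) * wt γ Z (P i).1 (P i).2 := by
      rw [hdec (w i)]
      exact Finset.sum_congr rfl (fun Z _ => mul_comm _ _)
    rw [← this]
    exact hwpos i

end Aux4

theorem stmt9 {n k : ℕ} (γ : ℝ) (hγ0 : 0 < γ) (hγ1 : γ < 1) (hk : 1 ≤ k)
    (P : Fin k → Finset (Fin n) × Finset (Fin n)) (X₀ Y₀ : Finset (Fin n))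
    (hproper : properFrom γ P Finset.univ X₀ Y₀) :
    ∀ i, (P i).1 ⊆ X₀ ∧ ¬ ((P i).1 ∪ (P i).2 ⊆ X₀) := by
  obtain ⟨hent, hmin⟩ := hproper
  have hne : (Finset.univ : Finset (Fin k)).Nonempty := ⟨⟨0, hk⟩, Finset.mem_univ _⟩
  have hY₀ : ¬ (X₀ ∪ Y₀ ⊆ X₀) := by
    intro hY
    refine hmin ∅ (Finset.empty_ssubset.mpr hne) ?_
    intro D _
    right
    have hXY : X₀ ∪ Y₀ = X₀ := Finset.Subset.antisymm hY Finset.subset_union_left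
    rw [hXY]
    have h0 : (0:ℝ) ≤ (cntD D X₀ : ℝ) := Nat.cast_nonneg _
    nlinarith
  have hw0X₀ : wt γ X₀ X₀ Y₀ = -γ := by
    unfold wt
    simp [hY₀]
  intro i
  by_contra hbad
  refine hmin (Finset.univ.erase i) (Finset.erase_ssubset (Finset.mem_univ i)) ?_
  intro D hD
  rw [satPI_iff hγ0]
  have key : ∀ η : ℝ, 0 < η → γ * (cntD D X₀ : ℝ) ≤ (cntD D (X₀ ∪ Y₀) : ℝ) + η := by
    intro η hη
    have hcD0 : (0:ℝ) ≤ (Multiset.card D : ℝ) := by positivity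
    have hK0 : (0:ℝ) < 1 / (γ * (1 - γ)) := by
      have : (0:ℝ) < γ * (1 - γ) := by nlinarith
      positivity
    set K : ℝ := 1 / (γ * (1 - γ)) with hK
    set ε : ℝ := η / ((K + 1) * ((Multiset.card D : ℝ) + 1)) with hεdef
    have hε0 : 0 < ε := by
      rw [hεdef]
      have h1 : (0:ℝ) < (K + 1) * ((Multiset.card D : ℝ) + 1) := by nlinarith
      positivity
    obtain ⟨lam, hlam0, hdom⟩ := eps_dual hγ0 hγ1 P X₀ Y₀ hent ε hε0
    -- evaluation at univ : Σ lam ≤ (1-γ+ε)/(1-γ)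
    have h1 : (∑ j ∈ Finset.univ, lam j) * (1 - γ) ≤ (1 - γ) + ε := by
      have h := hdom Finset.univ
      simp only [wt_univ] at h
      rw [Finset.sum_mul]
      exact h
    -- evaluation at X₀
    have h2 : ∑ j ∈ Finset.univ, lam j * wt γ X₀ (P j).1 (P j).2 ≤ -γ + ε := by
      have h := hdom X₀
      rw [hw0X₀] at h
      exact h
    have hsplit := Finset.sum_filter_add_sum_filter_not Finset.univ
      (fun j => wt γ X₀ (P j).1 (P j).2 < 0) (fun j => lam j * wt γ X₀ (P j).1 (P j).2)
    have hrest : 0 ≤ ∑ j ∈ Finset.univ.filter (fun j => ¬ wt γ X₀ (P j).1 (P j).2 < 0),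
        lam j * wt γ X₀ (P j).1 (P j).2 :=
      Finset.sum_nonneg (fun j hj =>
        mul_nonneg (hlam0 j) (not_lt.mp (Finset.mem_filter.mp hj).2))
    have hBsum : ∑ j ∈ Finset.univ.filter (fun j => wt γ X₀ (P j).1 (P j).2 < 0),
        lam j * wt γ X₀ (P j).1 (P j).2
        = -γ * ∑ j ∈ Finset.univ.filter (fun j => wt γ X₀ (P j).1 (P j).2 < 0), lam j := by
      rw [Finset.mul_sum]
      refine Finset.sum_congr rfl (fun j hj => ?_)
      rw [wt_of_neg (le_of_lt hγ1) (Finset.mem_filter.mp hj).2]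
      ring
    have hB : γ - ε ≤ γ * ∑ j ∈ Finset.univ.filter (fun j => wt γ X₀ (P j).1 (P j).2 < 0), lam j := by
      nlinarith [hsplit, hrest, hBsum, h2]
    have hiB : i ∈ Finset.univ.filter (fun j => ¬ wt γ X₀ (P j).1 (P j).2 < 0) := by
      refine Finset.mem_filter.mpr ⟨Finset.mem_univ i, ?_⟩
      intro hneg
      exact hbad (wt_neg_imp (le_of_lt hγ1) hneg)
    have hile : lam i ≤ (∑ j ∈ Finset.univ, lam j)
        - ∑ j ∈ Finset.univ.filter (fun j => wt γ X₀ (P j).1 (P j).2 < 0), lam j := by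
      have h3 := Finset.sum_filter_add_sum_filter_not Finset.univ
        (fun j => wt γ X₀ (P j).1 (P j).2 < 0) lam
      have h4 : lam i ≤ ∑ j ∈ Finset.univ.filter (fun j => ¬ wt γ X₀ (P j).1 (P j).2 < 0), lam j :=
        Finset.single_le_sum (fun j _ => hlam0 j) hiB
      linarith
    have hlami : lam i * (γ * (1 - γ)) ≤ ε := by
      have e1 : (∑ j ∈ Finset.univ, lam j) * (1 - γ) * γ ≤ ((1 - γ) + ε) * γ :=
        mul_le_mul_of_nonneg_right h1 (le_of_lt hγ0)
      have e2 : (γ - ε) * (1 - γ) ≤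
          γ * (∑ j ∈ Finset.univ.filter (fun j => wt γ X₀ (P j).1 (P j).2 < 0), lam j) * (1 - γ) :=
        mul_le_mul_of_nonneg_right hB (by linarith)
      have e3 : lam i * (γ * (1 - γ))
          ≤ ((∑ j ∈ Finset.univ, lam j)
            - ∑ j ∈ Finset.univ.filter (fun j => wt γ X₀ (P j).1 (P j).2 < 0), lam j)
            * (γ * (1 - γ)) :=
        mul_le_mul_of_nonneg_right hile (mul_nonneg hγ0.le (by linarith))
      nlinarith [e1, e2, e3]
    -- final estimate
    have hSj : ∀ j ∈ Finset.univ.erase i,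
        0 ≤ (cntD D ((P j).1 ∪ (P j).2) : ℝ) - γ * (cntD D (P j).1 : ℝ) := by
      intro j hj
      have := (satPI_iff hγ0 D (P j).1 (P j).2).mp (hD j hj)
      linarith
    have hswap : ∑ Z ∈ Finset.univ, (D.count Z : ℝ)
          * (∑ j ∈ Finset.univ, lam j * wt γ Z (P j).1 (P j).2)
        = ∑ j ∈ Finset.univ, lam j
          * ((cntD D ((P j).1 ∪ (P j).2) : ℝ) - γ * (cntD D (P j).1 : ℝ)) := by
      simp only [Finset.mul_sum]
      rw [Finset.sum_comm]
      refine Finset.sum_congr rfl (fun j _ => ?_)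
      rw [sum_wt γ D, Finset.mul_sum]
      exact Finset.sum_congr rfl (fun Z _ => by ring)
    have hcount : ∑ Z ∈ Finset.univ, (D.count Z : ℝ) = (Multiset.card D : ℝ) := by
      rw [← card_eq_sum_count D]
      push_cast
      rfl
    have hupper : ∑ Z ∈ Finset.univ, (D.count Z : ℝ)
          * (∑ j ∈ Finset.univ, lam j * wt γ Z (P j).1 (P j).2)
        ≤ ((cntD D (X₀ ∪ Y₀) : ℝ) - γ * (cntD D X₀ : ℝ)) + ε * (Multiset.card D : ℝ) := by
      calc ∑ Z ∈ Finset.univ, (D.count Z : ℝ)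
            * (∑ j ∈ Finset.univ, lam j * wt γ Z (P j).1 (P j).2)
          ≤ ∑ Z ∈ Finset.univ, (D.count Z : ℝ) * (wt γ Z X₀ Y₀ + ε) :=
            Finset.sum_le_sum (fun Z _ =>
              mul_le_mul_of_nonneg_left (hdom Z) (by positivity))
        _ = (∑ Z ∈ Finset.univ, (D.count Z : ℝ) * wt γ Z X₀ Y₀)
            + ε * ∑ Z ∈ Finset.univ, (D.count Z : ℝ) := by
            rw [Finset.mul_sum]
            rw [← Finset.sum_add_distrib]
            exact Finset.sum_congr rfl (fun Z _ => by ring)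
        _ = ((cntD D (X₀ ∪ Y₀) : ℝ) - γ * (cntD D X₀ : ℝ)) + ε * (Multiset.card D : ℝ) := by
            rw [← sum_wt γ D X₀ Y₀, hcount]
    -- Σ_j lam_j S_j ≥ lam_i * S_i ≥ -lam_i * cardD
    have hXi_le : (cntD D (P i).1 : ℝ) ≤ (Multiset.card D : ℝ) := by
      have : cntD D (P i).1 ≤ Multiset.card D := Multiset.card_le_card (Multiset.filter_le _ D)
      exact_mod_cast this
    have hSi : -(Multiset.card D : ℝ)
        ≤ (cntD D ((P i).1 ∪ (P i).2) : ℝ) - γ * (cntD D (P i).1 : ℝ) := by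
      have h5 : (0:ℝ) ≤ (cntD D ((P i).1 ∪ (P i).2) : ℝ) := by positivity
      nlinarith
    have hlower : -(lam i) * (Multiset.card D : ℝ)
        ≤ ∑ j ∈ Finset.univ, lam j
          * ((cntD D ((P j).1 ∪ (P j).2) : ℝ) - γ * (cntD D (P j).1 : ℝ)) := by
      rw [← Finset.add_sum_erase Finset.univ _ (Finset.mem_univ i)]
      have h6 : 0 ≤ ∑ j ∈ Finset.univ.erase i, lam j
          * ((cntD D ((P j).1 ∪ (P j).2) : ℝ) - γ * (cntD D (P j).1 : ℝ)) :=
        Finset.sum_nonneg (fun j hj => mul_nonneg (hlam0 j) (hSj j hj))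
      have h7 : -(lam i) * (Multiset.card D : ℝ)
          ≤ lam i * ((cntD D ((P i).1 ∪ (P i).2) : ℝ) - γ * (cntD D (P i).1 : ℝ)) := by
        have := mul_le_mul_of_nonneg_left hSi (hlam0 i)
        linarith
      linarith
    -- combine
    have hcomb : -(lam i) * (Multiset.card D : ℝ)
        ≤ ((cntD D (X₀ ∪ Y₀) : ℝ) - γ * (cntD D X₀ : ℝ)) + ε * (Multiset.card D : ℝ) := by
      calc -(lam i) * (Multiset.card D : ℝ) ≤ _ := hlower
        _ = ∑ Z ∈ Finset.univ, (D.count Z : ℝ)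
            * (∑ j ∈ Finset.univ, lam j * wt γ Z (P j).1 (P j).2) := hswap.symm
        _ ≤ _ := hupper
    -- lam i ≤ ε * K  and ε * (K+1) * (cardD+1) = η
    have hlamK : lam i ≤ ε * K := by
      rw [hK, mul_one_div]
      rw [le_div_iff₀ (mul_pos hγ0 (by linarith : (0:ℝ) < 1 - γ))]
      exact hlami
    have hden : ((K + 1) * ((Multiset.card D : ℝ) + 1)) ≠ 0 := by
      have := mul_pos (by linarith : (0:ℝ) < K + 1)
        (by linarith : (0:ℝ) < (Multiset.card D : ℝ) + 1)
      exact ne_of_gt this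
    have hεη : ε * ((K + 1) * ((Multiset.card D : ℝ) + 1)) = η := by
      rw [hεdef, div_mul_cancel₀ _ hden]
    have t1 : lam i * (Multiset.card D : ℝ) ≤ ε * K * (Multiset.card D : ℝ) :=
      mul_le_mul_of_nonneg_right hlamK hcD0
    have u1 : ε * K * (Multiset.card D : ℝ) + ε * (Multiset.card D : ℝ)
        = ε * (K + 1) * (Multiset.card D : ℝ) := by ring
    have u0 : (0:ℝ) ≤ ε * (K + 1) := mul_nonneg hε0.le (by linarith)
    have u2 : ε * (K + 1) * (Multiset.card D : ℝ)
        ≤ ε * (K + 1) * ((Multiset.card D : ℝ) + 1) :=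
      mul_le_mul_of_nonneg_left (by linarith) u0
    have u3 : ε * (K + 1) * ((Multiset.card D : ℝ) + 1) = η := by
      rw [← hεη]; ring
    linarith [hcomb, t1, u1, u2, u3]
  by_contra hlt
  push_neg at hlt
  have := key ((γ * (cntD D X₀ : ℝ) - (cntD D (X₀ ∪ Y₀) : ℝ)) / 2) (by linarith)
  linarith
end

section
/- Let X₁ → Y₁, …, X_k → Y_k be partial implications over [n] with k ≥ 1. If there exist a partial implication X₀ → Y₀ and a confidence parameter γ with 0 < γ < 1 such that the entailment X₁ → Y₁, …, X_k → Y_k ⊨_γ X₀ → Y₀ holds properly, then the set X₁ → Y₁, …, X_k → Y_k enforces homogeneity. -/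
open Finset

lemma cntD_le_card {n : ℕ} (D : Multiset (Finset (Fin n))) (X : Finset (Fin n)) :
    cntD D X ≤ Multiset.card D :=
  Multiset.card_le_card (Multiset.filter_le _ _)

lemma cntD_map_inter {n : ℕ} (D : Multiset (Finset (Fin n))) {Z X : Finset (Fin n)}
    (h : X ⊆ Z) : cntD (D.map (· ∩ Z)) X = cntD D X := by
  unfold cntD
  rw [Multiset.filter_map, Multiset.card_map]
  congr 1
  apply Multiset.filter_congr
  intro T _
  simp [Finset.subset_inter_iff, h]

lemma cntD_map_inter_zero {n : ℕ} (D : Multiset (Finset (Fin n))) {Z X : Finset (Fin n)}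
    (h : ¬ X ⊆ Z) : cntD (D.map (· ∩ Z)) X = 0 := by
  unfold cntD
  rw [Multiset.card_eq_zero, Multiset.filter_eq_nil]
  intro T hT
  simp only [Multiset.mem_map] at hT
  obtain ⟨S, _, rfl⟩ := hT
  intro hsub
  exact h (hsub.trans Finset.inter_subset_right)

lemma cntD_add {n : ℕ} (D₁ D₂ : Multiset (Finset (Fin n))) (X : Finset (Fin n)) :
    cntD (D₁ + D₂) X = cntD D₁ X + cntD D₂ X := by
  unfold cntD
  rw [Multiset.filter_add, Multiset.card_add]

lemma cntD_replicate {n : ℕ} (m : ℕ) (Z X : Finset (Fin n)) :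
    cntD (Multiset.replicate m Z) X = if X ⊆ Z then m else 0 := by
  unfold cntD
  split_ifs with h
  · rw [Multiset.filter_eq_self.2, Multiset.card_replicate]
    intro a ha
    rwa [Multiset.eq_of_mem_replicate ha]
  · rw [Multiset.filter_eq_nil.2, Multiset.card_zero]
    intro a ha
    rwa [Multiset.eq_of_mem_replicate ha]

theorem stmt12 {n k : ℕ} (hk : 1 ≤ k)
    (P : Fin k → Finset (Fin n) × Finset (Fin n))
    (h : ∃ (X₀ Y₀ : Finset (Fin n)) (γ : ℝ), 0 < γ ∧ γ < 1 ∧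
      properFrom γ P Finset.univ X₀ Y₀) :
    homogFrom P Finset.univ := by
  obtain ⟨X₀, Y₀, γ, hγ0, hγ1, hent, hprop⟩ := h
  intro Z hZ
  by_contra hbad
  push_neg at hbad
  obtain ⟨⟨j, -, hjX⟩, j', -, hj'⟩ := hbad
  have hjA : (P j).1 ∪ (P j).2 ⊆ Z :=
    (hZ j (mem_univ j)).resolve_left (not_not_intro hjX)
  have hj'B : ¬ (P j').1 ⊆ Z := by
    rcases hZ j' (mem_univ j') with h1 | h1
    · exact h1
    · exact absurd h1 hj'
  by_cases hc : X₀ ∪ Y₀ ⊆ Z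
  · -- use the premises A = {i : XᵢYᵢ ⊆ Z}, intersect the witness dataset with Z
    set A : Finset (Fin k) := univ.filter (fun i => (P i).1 ∪ (P i).2 ⊆ Z) with hA
    have hAss : A ⊂ univ := by
      rw [Finset.ssubset_univ_iff]
      intro hEq
      have : j' ∈ A := hEq ▸ mem_univ j'
      rw [hA, mem_filter] at this
      exact hj' this.2
    have hne := hprop A hAss
    rw [entailsFrom] at hne
    push_neg at hne
    obtain ⟨D, hsat, hvi⟩ := hne
    set D' := D.map (· ∩ Z) with hD'
    have hall : ∀ i ∈ (univ : Finset (Fin k)), satPI γ D' (P i).1 (P i).2 := by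
      intro i _
      rcases hZ i (mem_univ i) with h1 | h1
      · left
        exact cntD_map_inter_zero D h1
      · have hiA : i ∈ A := by rw [hA, mem_filter]; exact ⟨mem_univ i, h1⟩
        have hX : (P i).1 ⊆ Z := (Finset.subset_union_left).trans h1
        rcases hsat i hiA with h2 | h2
        · left; rwa [hD', cntD_map_inter D hX]
        · right; rwa [hD', cntD_map_inter D hX, cntD_map_inter D h1]
    have hX₀ : X₀ ⊆ Z := (Finset.subset_union_left).trans hc
    have := hent D' hall
    rw [satPI, hD', cntD_map_inter D hX₀, cntD_map_inter D hc] at this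
    exact hvi this
  · -- use the premises B = {i : Xᵢ ⊄ Z}, add many copies of Z
    set B : Finset (Fin k) := univ.filter (fun i => ¬ (P i).1 ⊆ Z) with hB
    have hBss : B ⊂ univ := by
      rw [Finset.ssubset_univ_iff]
      intro hEq
      have : j ∈ B := hEq ▸ mem_univ j
      rw [hB, mem_filter] at this
      exact this.2 hjX
    have hne := hprop B hBss
    rw [entailsFrom] at hne
    push_neg at hne
    obtain ⟨D, hsat, hvi⟩ := hne
    have h1γ : 0 < 1 - γ := by linarith
    set m : ℕ := Nat.ceil ((Multiset.card D : ℝ) / (1 - γ)) with hm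
    have hmkey : ∀ a : ℕ, a ≤ Multiset.card D → γ * (a + m) ≤ m := by
      intro a ha
      have h1 : ((Multiset.card D : ℝ) / (1 - γ)) ≤ m := Nat.le_ceil _
      have h2 : (Multiset.card D : ℝ) ≤ (1 - γ) * m := by
        rw [div_le_iff₀ h1γ] at h1; linarith
      have h3 : (a : ℝ) ≤ Multiset.card D := Nat.cast_le.2 ha
      nlinarith
    set D' := D + Multiset.replicate m Z with hD'
    have hcnt : ∀ X : Finset (Fin n),
        (cntD D' X : ℝ) = cntD D X + if X ⊆ Z then (m : ℝ) else 0 := by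
      intro X
      rw [hD', cntD_add, cntD_replicate]
      split_ifs <;> push_cast <;> ring
    have hall : ∀ i ∈ (univ : Finset (Fin k)), satPI γ D' (P i).1 (P i).2 := by
      intro i _
      rcases hZ i (mem_univ i) with h1 | h1
      · -- i ∈ B : counts unchanged
        have hiB : i ∈ B := by rw [hB, mem_filter]; exact ⟨mem_univ i, h1⟩
        have h1' : ¬ (P i).1 ∪ (P i).2 ⊆ Z := fun hs =>
          h1 ((Finset.subset_union_left).trans hs)
        rcases hsat i hiB with h2 | h2
        · left
          have := hcnt (P i).1
          rw [if_neg h1, h2] at this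
          exact_mod_cast by simpa using this
        · right
          rw [hcnt (P i).1, hcnt ((P i).1 ∪ (P i).2), if_neg h1, if_neg h1']
          simpa using h2
      · -- XᵢYᵢ ⊆ Z : confidence pushed up by the m copies of Z
        right
        have hX : (P i).1 ⊆ Z := (Finset.subset_union_left).trans h1
        rw [hcnt (P i).1, hcnt ((P i).1 ∪ (P i).2), if_pos hX, if_pos h1]
        have hkey := hmkey (cntD D (P i).1) (cntD_le_card D _)
        have hb : (0 : ℝ) ≤ cntD D ((P i).1 ∪ (P i).2) := Nat.cast_nonneg _
        push_cast at hkey ⊢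
        linarith
    have hsat' := hent D' hall
    apply hvi
    rw [satPI] at hsat' ⊢
    have e0 : (cntD D' X₀ : ℝ) = cntD D X₀ + if X₀ ⊆ Z then (m : ℝ) else 0 := hcnt X₀
    have e1 : (cntD D' (X₀ ∪ Y₀) : ℝ) = cntD D (X₀ ∪ Y₀) := by
      rw [hcnt (X₀ ∪ Y₀), if_neg hc]; ring
    rcases hsat' with h2 | h2
    · left
      have : (cntD D' X₀ : ℝ) = 0 := by exact_mod_cast h2
      rw [e0] at this
      have hx0 : (0:ℝ) ≤ (cntD D X₀ : ℝ) := Nat.cast_nonneg _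
      have hif : (0:ℝ) ≤ if X₀ ⊆ Z then (m : ℝ) else 0 := by positivity
      have : (cntD D X₀ : ℝ) = 0 := by linarith
      exact_mod_cast this
    · right
      rw [e0, e1] at h2
      have hif : (0:ℝ) ≤ if X₀ ⊆ Z then (m : ℝ) else 0 := by positivity
      nlinarith
end
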